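/- One-step ratio bound (Eq. (pf) in the proof of Theorem 5.3): Let (Ω, 𝓕, μ) be a probability space, let α_1, α_2, r, R_max > 0 with r·R_max ≤ α_1, and let R_1, R_2 : Ω → ℝ be integrable random variables with 0 ≤ R_1 ≤ R_max and 0 ≤ R_2 ≤ R_max almost everywhere and α_2·∫R_1 dμ = α_1·∫R_2 dμ. Then for every real x > 0 with x·α_2 < α_1: μ({ω : (α_1 + r·R_1(ω))/(α_2 + r·R_2(ω)) ≤ x}) ≤ x·α_2/α_1. -/

import Mathlib

open MeasureTheory

/-- One-step ratio bound (Eq. (pf) in the proof of Theorem 5.3): with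
rewards bounded by `Rmax` and equal mean reward rates per unit resource,
the probability that the power ratio drops to at most `x` is at most
`x·α₂/α₁`. -/
theorem stmt_7 {Ω : Type*} [MeasurableSpace Ω] (μ : Measure Ω) [IsProbabilityMeasure μ]
    (α₁ α₂ r Rmax : ℝ) (hα₁ : 0 < α₁) (hα₂ : 0 < α₂) (hr : 0 < r) (hRmax : 0 < Rmax)
    (hrR : r * Rmax ≤ α₁)
    (R₁ R₂ : Ω → ℝ) (hInt₁ : Integrable R₁ μ) (hInt₂ : Integrable R₂ μ)
    (hbd₁ : ∀ᵐ ω ∂μ, 0 ≤ R₁ ω ∧ R₁ ω ≤ Rmax)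
    (hbd₂ : ∀ᵐ ω ∂μ, 0 ≤ R₂ ω ∧ R₂ ω ≤ Rmax)
    (hmean : α₂ * ∫ ω, R₁ ω ∂μ = α₁ * ∫ ω, R₂ ω ∂μ) :
    ∀ x : ℝ, 0 < x → x * α₂ < α₁ →
      μ {ω | (α₁ + r * R₁ ω) / (α₂ + r * R₂ ω) ≤ x} ≤ ENNReal.ofReal (x * α₂ / α₁) := by
  intro x hx hxα
  -- measurable versions
  set f := hInt₁.1.mk R₁ with hfdef
  set g := hInt₂.1.mk R₂ with hgdef
  have hfm : StronglyMeasurable f := hInt₁.1.stronglyMeasurable_mk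
  have hgm : StronglyMeasurable g := hInt₂.1.stronglyMeasurable_mk
  have hfe : R₁ =ᵐ[μ] f := hInt₁.1.ae_eq_mk
  have hge : R₂ =ᵐ[μ] g := hInt₂.1.ae_eq_mk
  have hIntf : Integrable f μ := hInt₁.congr hfe
  have hIntg : Integrable g μ := hInt₂.congr hge
  have hbdf : ∀ᵐ ω ∂μ, 0 ≤ f ω ∧ f ω ≤ Rmax := by
    filter_upwards [hbd₁, hfe] with ω h1 h2
    rw [← h2]; exact h1
  have hbdg : ∀ᵐ ω ∂μ, 0 ≤ g ω ∧ g ω ≤ Rmax := by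
    filter_upwards [hbd₂, hge] with ω h1 h2
    rw [← h2]; exact h1
  set A : Set Ω := {ω | α₁ + r * f ω ≤ x * (α₂ + r * g ω)} with hAdef
  have hA : MeasurableSet A := by
    apply measurableSet_le
    · exact measurable_const.add (hfm.measurable.const_mul r)
    · exact (measurable_const.add (hgm.measurable.const_mul r)).const_mul x
  -- the original set equals A a.e.
  have hsets : {ω | (α₁ + r * R₁ ω) / (α₂ + r * R₂ ω) ≤ x} =ᵐ[μ] A := by
    apply Filter.eventuallyEq_set.2
    filter_upwards [hbd₂, hfe, hge] with ω h2 e1 e2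
    have hden : 0 < α₂ + r * R₂ ω := by nlinarith [h2.1]
    simp only [Set.mem_setOf_eq, hAdef, ← e1, ← e2]
    rw [div_le_iff₀ hden]
  rw [measure_congr hsets]
  -- real quantities
  set p := (μ A).toReal with hp
  have hpt : μ A ≠ ⊤ := (measure_lt_top μ A).ne
  have hp1 : p ≤ 1 := by
    rw [hp]
    exact ENNReal.toReal_le_of_le_ofReal one_pos.le (by simpa using prob_le_one)
  have hp0 : 0 ≤ p := ENNReal.toReal_nonneg
  -- integrals
  set I1A := ∫ ω in A, f ω ∂μ with hI1A
  set I1C := ∫ ω in Aᶜ, f ω ∂μ with hI1C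
  set I2A := ∫ ω in A, g ω ∂μ with hI2A
  have hIntfA : IntegrableOn f A μ := hIntf.integrableOn
  have hIntgA : IntegrableOn g A μ := hIntg.integrableOn
  -- main set integral inequality
  have key : α₁ * p + r * I1A ≤ x * (α₂ * p + r * I2A) := by
    have h1 : ∫ ω in A, (α₁ + r * f ω) ∂μ ≤ ∫ ω in A, x * (α₂ + r * g ω) ∂μ := by
      apply setIntegral_mono_on
      · exact (integrableOn_const (measure_lt_top _ _).ne).add (hIntfA.const_mul r)
      · exact ((integrableOn_const (measure_lt_top _ _).ne).add (hIntgA.const_mul r)).const_mul x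
      · exact hA
      · intro ω hω; exact hω
    have e1 : ∫ ω in A, (α₁ + r * f ω) ∂μ = α₁ * p + r * I1A := by
      rw [integral_add (integrableOn_const (C := α₁) (s := A) (μ := μ) (measure_lt_top _ _).ne) (hIntfA.const_mul r),
        integral_const, integral_const_mul]
      simp [hp, mul_comm, Measure.real_def, hI1A]
    have e2 : ∫ ω in A, x * (α₂ + r * g ω) ∂μ = x * (α₂ * p + r * I2A) := by
      rw [integral_const_mul, integral_add (integrableOn_const (C := α₂) (s := A) (μ := μ) (measure_lt_top _ _).ne) (hIntgA.const_mul r),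
        integral_const, integral_const_mul]
      simp [hp, mul_comm, Measure.real_def, hI2A]
    rw [e1, e2] at h1
    exact h1
  -- I2A ≤ ∫ g
  have hI2le : I2A ≤ ∫ ω, g ω ∂μ := by
    apply setIntegral_le_integral hIntg
    filter_upwards [hbdg] with ω h; exact h.1
  -- mean condition for f, g
  have hmean' : α₂ * ∫ ω, f ω ∂μ = α₁ * ∫ ω, g ω ∂μ := by
    rw [← integral_congr_ae hfe, ← integral_congr_ae hge]; exact hmean
  -- split ∫ f
  have hsplit : I1A + I1C = ∫ ω, f ω ∂μ := integral_add_compl hA hIntf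
  -- bounds
  have hI1Anneg : 0 ≤ I1A := by
    apply setIntegral_nonneg_ae hA
    filter_upwards [hbdf] with ω h _; exact h.1
  have hI1Cnneg : 0 ≤ I1C := by
    apply setIntegral_nonneg_ae hA.compl
    filter_upwards [hbdf] with ω h _; exact h.1
  have hI1Cle : I1C ≤ Rmax * (1 - p) := by
    have h1 : I1C ≤ ∫ _ω in Aᶜ, Rmax ∂μ := by
      apply setIntegral_mono_ae_restrict hIntf.integrableOn (integrableOn_const (measure_lt_top _ _).ne)
      filter_upwards [ae_restrict_of_ae hbdf] with ω h; exact h.2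
    have h2 : ∫ _ω in Aᶜ, Rmax ∂μ = (1 - p) * Rmax := by
      rw [setIntegral_const, Measure.real_def, prob_compl_eq_one_sub hA,
        ENNReal.toReal_sub_of_le prob_le_one ENNReal.one_ne_top]
      simp [hp, smul_eq_mul]
    rw [h2] at h1; linarith
  -- conclude p * α₁ ≤ x * α₂
  have hEf0 : 0 ≤ ∫ ω, f ω ∂μ := by
    apply integral_nonneg_of_ae
    filter_upwards [hbdf] with ω h; exact h.1
  have hg_eq : ∫ ω, g ω ∂μ = (α₂ / α₁) * ∫ ω, f ω ∂μ := by
    field_simp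
    linarith [hmean']
  have hfinal : p * α₁ ≤ x * α₂ := by
    rw [hg_eq, ← hsplit] at hI2le
    have h1p : 0 ≤ 1 - p := by linarith
    have s1 : x * (r * I2A) ≤ x * (r * ((α₂ / α₁) * (I1A + I1C))) :=
      mul_le_mul_of_nonneg_left (mul_le_mul_of_nonneg_left hI2le hr.le) hx.le
    have c1 : x * α₂ / α₁ ≤ 1 := (div_le_one hα₁).2 hxα.le
    have s3 : x * (r * ((α₂ / α₁) * I1A)) ≤ r * I1A := by
      have e : x * (r * ((α₂ / α₁) * I1A)) = (r * I1A) * (x * α₂ / α₁) := by ring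
      rw [e]
      calc (r * I1A) * (x * α₂ / α₁) ≤ (r * I1A) * 1 :=
            mul_le_mul_of_nonneg_left c1 (mul_nonneg hr.le hI1Anneg)
        _ = r * I1A := mul_one _
    have s4 : x * (r * ((α₂ / α₁) * I1C)) ≤ x * α₂ * (1 - p) := by
      have hrc : r * I1C ≤ α₁ * (1 - p) := by
        calc r * I1C ≤ r * (Rmax * (1 - p)) := mul_le_mul_of_nonneg_left hI1Cle hr.le
          _ = (r * Rmax) * (1 - p) := by ring
          _ ≤ α₁ * (1 - p) := mul_le_mul_of_nonneg_right hrR h1p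
      calc x * (r * ((α₂ / α₁) * I1C)) = (x * α₂ / α₁) * (r * I1C) := by ring
        _ ≤ (x * α₂ / α₁) * (α₁ * (1 - p)) :=
            mul_le_mul_of_nonneg_left hrc
              (div_nonneg (mul_nonneg hx.le hα₂.le) hα₁.le)
        _ = x * α₂ * (1 - p) := by field_simp
    have e2 : x * (r * ((α₂ / α₁) * (I1A + I1C)))
        = x * (r * ((α₂ / α₁) * I1A)) + x * (r * ((α₂ / α₁) * I1C)) := by ring
    have key' : α₁ * p + r * I1A ≤ x * (α₂ * p) + x * (r * I2A) := by
      have : x * (α₂ * p + r * I2A) = x * (α₂ * p) + x * (r * I2A) := by ring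
      linarith [key, this.le, this.ge]
    nlinarith [key', s1, s3, s4, e2.le, e2.ge]
  -- finish
  have : μ A = ENNReal.ofReal p := (ENNReal.ofReal_toReal hpt).symm
  rw [this]
  apply ENNReal.ofReal_le_ofReal
  rw [le_div_iff₀ hα₁]
  exact hfinal
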